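/- The regularized Bellman optimality operator, defined on ℝ^S by [T_Ω v](s) = sup over distributions μ ∈ Δ_A of ( Σ_a μ(a)( r(s,a) + γ Σ_{s'} p(s'|s,a) v(s') ) − Ω(μ) ), is a γ-contraction with respect to the supremum norm: for all v, w ∈ ℝ^S, ‖T_Ω v − T_Ω w‖_∞ ≤ γ ‖v − w‖_∞. Moreover the supremum is attained for each s. -/

import Mathlib

/-- The regularized Bellman optimality operator
`[T_Ω v](s) = sup_{μ ∈ Δ_A} ( Σ_a μ(a)(r(s,a) + γ Σ_{s'} p(s'|s,a) v(s')) − Ω(μ) )`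
is a γ-contraction in the supremum norm, and the supremum is attained for each `s`. -/
theorem regularized_bellman_optimality_operator_contraction
    {S A : Type*} [Fintype S] [Fintype A] [Nonempty S] [Nonempty A]
    (p : S → A → S → ℝ)
    (hp_nonneg : ∀ s a s', 0 ≤ p s a s')
    (hp_sum : ∀ s a, ∑ s', p s a s' = 1)
    (r : S → A → ℝ)
    (γ : ℝ) (hγ0 : 0 ≤ γ) (hγ1 : γ < 1)
    (Ω : (A → ℝ) → ℝ)
    (hΩ : ContinuousOn Ω (stdSimplex ℝ A))
    (T : (S → ℝ) → (S → ℝ))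
    (hT : ∀ v s, T v s =
      sSup ((fun μ => (∑ a, μ a * (r s a + γ * ∑ s', p s a s' * v s')) - Ω μ) ''
        stdSimplex ℝ A)) :
    (∀ v w : S → ℝ, ‖T v - T w‖ ≤ γ * ‖v - w‖) ∧
    (∀ (v : S → ℝ) (s : S), ∃ μ ∈ stdSimplex ℝ A,
      T v s = (∑ a, μ a * (r s a + γ * ∑ s', p s a s' * v s')) - Ω μ) := by
  classical
  set f : (S → ℝ) → S → (A → ℝ) → ℝ :=
    fun v s μ => (∑ a, μ a * (r s a + γ * ∑ s', p s a s' * v s')) - Ω μ with hf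
  have hne : (stdSimplex ℝ A).Nonempty :=
    ⟨_, single_mem_stdSimplex ℝ (Classical.arbitrary A)⟩
  have hcont : ∀ v s, ContinuousOn (f v s) (stdSimplex ℝ A) := by
    intro v s
    exact ContinuousOn.sub
      (Continuous.continuousOn (continuous_finset_sum _ fun a _ =>
        (continuous_apply a).mul continuous_const)) hΩ
  -- attainment
  have hatt : ∀ (v : S → ℝ) (s : S), ∃ μ ∈ stdSimplex ℝ A, T v s = f v s μ := by
    intro v s
    obtain ⟨μ, hμ, h⟩ := (isCompact_stdSimplex ℝ A).exists_sSup_image_eq hne (hcont v s)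
    exact ⟨μ, hμ, (hT v s).trans h⟩
  have hbdd : ∀ v s, BddAbove (f v s '' stdSimplex ℝ A) := fun v s =>
    ((isCompact_stdSimplex ℝ A).image_of_continuousOn (hcont v s)).bddAbove
  -- key bound
  have key : ∀ (v w : S → ℝ) (s : S) (μ : A → ℝ), μ ∈ stdSimplex ℝ A →
      f v s μ - f w s μ ≤ γ * ‖v - w‖ := by
    intro v w s μ hμ
    have hdiff : f v s μ - f w s μ
        = ∑ a, μ a * (γ * ∑ s', p s a s' * (v s' - w s')) := by
      simp only [hf]
      rw [sub_sub_sub_cancel_right, ← Finset.sum_sub_distrib]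
      refine Finset.sum_congr rfl fun a _ => ?_
      rw [show (∑ s', p s a s' * (v s' - w s'))
          = (∑ s', p s a s' * v s') - ∑ s', p s a s' * w s' from by
        rw [← Finset.sum_sub_distrib]
        exact Finset.sum_congr rfl fun _ _ => by ring]
      ring
    rw [hdiff]
    calc ∑ a, μ a * (γ * ∑ s', p s a s' * (v s' - w s'))
        ≤ ∑ a, μ a * (γ * ‖v - w‖) := by
          refine Finset.sum_le_sum fun a _ => ?_
          refine mul_le_mul_of_nonneg_left ?_ (hμ.1 a)
          refine mul_le_mul_of_nonneg_left ?_ hγ0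
          calc ∑ s', p s a s' * (v s' - w s')
              ≤ ∑ s', p s a s' * ‖v - w‖ := by
                refine Finset.sum_le_sum fun s' _ => ?_
                refine mul_le_mul_of_nonneg_left ?_ (hp_nonneg s a s')
                calc v s' - w s' ≤ |v s' - w s'| := le_abs_self _
                  _ = ‖(v - w) s'‖ := by simp [Real.norm_eq_abs]
                  _ ≤ ‖v - w‖ := norm_le_pi_norm _ _
            _ = ‖v - w‖ := by rw [← Finset.sum_mul, hp_sum, one_mul]
      _ = γ * ‖v - w‖ := by rw [← Finset.sum_mul, hμ.2, one_mul]
  have hle : ∀ (v w : S → ℝ) (s : S), T v s - T w s ≤ γ * ‖v - w‖ := by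
    intro v w s
    obtain ⟨μ, hμ, h⟩ := hatt v s
    have h1 : f w s μ ≤ T w s := by
      rw [hT]; exact le_csSup (hbdd w s) ⟨μ, hμ, rfl⟩
    have := key v w s μ hμ
    linarith
  constructor
  · intro v w
    rw [pi_norm_le_iff_of_nonneg (by positivity)]
    intro s
    rw [Real.norm_eq_abs, abs_le]
    have h1 := hle v w s
    have h2 := hle w v s
    rw [show w - v = -(v - w) by abel, norm_neg] at h2
    constructor <;> simp only [Pi.sub_apply] <;> linarith
  · exact hatt
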